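/- arXiv:2306.17543 — 2 statements merged into one kernel-verified Lean document; each statement's English description precedes it below -/
import Mathlib

section
/- Assume α = 2πp/q where p, q are positive integers with gcd(p, q) = 1. Then the closure of the critical set is exactly the set of points whose orbit approaches the real axis: cl(𝓕) = {z ∈ ℂ : inf over integers n ≥ 0 of |Im(Fⁿ(z))| = 0}; equivalently, z ∈ cl(𝓕) if and only if for every ε > 0 there exists n ≥ 0 with |Im(Fⁿ(z))| < ε. -/
noncomputable def Hfun (z : ℂ) : ℂ := if 0 ≤ z.im then 1 else -1

noncomputable def Fmap (α : ℝ) (z : ℂ) : ℂ := Complex.exp (α * Complex.I) * (z - Hfun z)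

def critSet (α : ℝ) : Set ℂ := {z : ℂ | ∃ n : ℕ, ((Fmap α)^[n] z).im = 0}

def regSet (α : ℝ) : Set ℂ := (closure (critSet α))ᶜ

/-- `Fmap^[n]` is affine with rotation `λⁿ` on the ball of radius `r` around `z`. -/
def Aff (α : ℝ) (z : ℂ) (r : ℝ) (n : ℕ) : Prop :=
  ∀ w : ℂ, ‖w - z‖ < r →
    (Fmap α)^[n] w = (Fmap α)^[n] z + (Complex.exp (α * Complex.I))^n * (w - z)

lemma abs_c (α : ℝ) : ‖Complex.exp (α * Complex.I)‖ = 1 :=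
  Complex.norm_exp_ofReal_mul_I α

lemma aff_zero (α : ℝ) (z : ℂ) (r : ℝ) : Aff α z r 0 := fun w _ => by simp

lemma aff_step (α : ℝ) (z : ℂ) (r : ℝ) (n : ℕ) (h1 : Aff α z r n)
    (h2 : r ≤ |((Fmap α)^[n] z).im|) : Aff α z r (n + 1) := by
  intro w hw
  have hw' := h1 w hw
  have him : |((Complex.exp (α * Complex.I))^n * (w - z)).im| < r := by
    calc |((Complex.exp (α * Complex.I))^n * (w - z)).im|
        ≤ ‖(Complex.exp (α * Complex.I))^n * (w - z)‖ :=
          Complex.abs_im_le_norm _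
      _ = ‖w - z‖ := by
          rw [norm_mul, norm_pow, abs_c]; ring
      _ < r := hw
  have himw : ((Fmap α)^[n] w).im
      = ((Fmap α)^[n] z).im + ((Complex.exp (α * Complex.I))^n * (w - z)).im := by
    rw [hw']; simp
  have hH : Hfun ((Fmap α)^[n] w) = Hfun ((Fmap α)^[n] z) := by
    have habs := abs_lt.1 him
    unfold Hfun
    rcases le_or_gt 0 (((Fmap α)^[n] z).im) with h | h
    · have hr : r ≤ ((Fmap α)^[n] z).im := by rwa [abs_of_nonneg h] at h2
      have : 0 ≤ ((Fmap α)^[n] w).im := by rw [himw]; linarith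
      simp [this, h]
    · have hr : ((Fmap α)^[n] z).im ≤ -r := by
        have := abs_of_neg h ▸ h2; linarith
      have : ((Fmap α)^[n] w).im < 0 := by rw [himw]; linarith
      simp [not_le.2 this, not_le.2 h]
  rw [Function.iterate_succ_apply', Function.iterate_succ_apply', Fmap, Fmap, hH, hw']
  ring

/-- If a ball around `z` misses the critical set and `Fmap^[n]` is affine on it,
then the `n`-th iterate of `z` is at distance ≥ r from the real axis. -/
lemma dist_ge_of_aff (α : ℝ) (z : ℂ) (r : ℝ) (n : ℕ)
    (hball : ∀ w : ℂ, ‖w - z‖ < r → w ∉ critSet α)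
    (h1 : Aff α z r n) : r ≤ |((Fmap α)^[n] z).im| := by
  by_contra h
  push_neg at h
  set c : ℂ := Complex.exp (α * Complex.I) with hc
  have hc0 : c ≠ 0 := Complex.exp_ne_zero _
  set t : ℝ := ((Fmap α)^[n] z).im with ht
  set w : ℂ := z - (c⁻¹)^n * (t : ℝ) * Complex.I with hwdef
  have habs : ‖w - z‖ = |t| := by
    have : w - z = -((c⁻¹)^n * (t : ℝ) * Complex.I) := by rw [hwdef]; ring
    rw [this, norm_neg, norm_mul, norm_mul, norm_pow, norm_inv, abs_c]
    simp
  have hwball : ‖w - z‖ < r := by rw [habs]; exact h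
  have hFw : (Fmap α)^[n] w = (Fmap α)^[n] z - (t : ℝ) * Complex.I := by
    rw [h1 w hwball]
    have hwz : w - z = -((c⁻¹)^n * (t : ℝ) * Complex.I) := by rw [hwdef]; ring
    rw [hwz]
    have hone : c^n * (c⁻¹)^n = 1 := by
      rw [← mul_pow, mul_inv_cancel₀ hc0, one_pow]
    calc (Fmap α)^[n] z + c^n * -((c⁻¹)^n * (t : ℝ) * Complex.I)
        = (Fmap α)^[n] z - (c^n * (c⁻¹)^n) * ((t : ℝ) * Complex.I) := by ring
      _ = (Fmap α)^[n] z - (t : ℝ) * Complex.I := by rw [hone, one_mul]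
  have : ((Fmap α)^[n] w).im = 0 := by rw [hFw]; simp [ht]
  exact hball w hwball ⟨n, this⟩

lemma aff_of_ball_miss (α : ℝ) (z : ℂ) (r : ℝ)
    (hball : ∀ w : ℂ, ‖w - z‖ < r → w ∉ critSet α) :
    ∀ n, Aff α z r n := by
  intro n
  induction n with
  | zero => exact aff_zero α z r
  | succ n ih => exact aff_step α z r n ih (dist_ge_of_aff α z r n hball ih)

lemma orbit_far_of_ball_miss (α : ℝ) (z : ℂ) (r : ℝ)
    (hball : ∀ w : ℂ, ‖w - z‖ < r → w ∉ critSet α) :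
    ∀ n, r ≤ |((Fmap α)^[n] z).im| := fun n =>
  dist_ge_of_aff α z r n hball (aff_of_ball_miss α z r hball n)

lemma ball_miss_of_orbit_far (α : ℝ) (z : ℂ) (r : ℝ) (hr : 0 < r)
    (hfar : ∀ n, r ≤ |((Fmap α)^[n] z).im|) :
    ∀ w : ℂ, ‖w - z‖ < r → w ∉ critSet α := by
  have haff : ∀ n, Aff α z r n := by
    intro n
    induction n with
    | zero => exact aff_zero α z r
    | succ n ih => exact aff_step α z r n ih (hfar n)
  rintro w hw ⟨n, hn⟩
  have hw' := haff n w hw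
  have him : |((Complex.exp (α * Complex.I))^n * (w - z)).im| < r := by
    calc |((Complex.exp (α * Complex.I))^n * (w - z)).im|
        ≤ ‖(Complex.exp (α * Complex.I))^n * (w - z)‖ :=
          Complex.abs_im_le_norm _
      _ = ‖w - z‖ := by rw [norm_mul, norm_pow, abs_c]; ring
      _ < r := hw
  have himw : ((Fmap α)^[n] w).im
      = ((Fmap α)^[n] z).im + ((Complex.exp (α * Complex.I))^n * (w - z)).im := by
    rw [hw']; simp
  have := hfar n
  have habs := abs_lt.1 him
  rcases abs_le.1 (le_of_eq (rfl : |((Fmap α)^[n] z).im| = _)) with _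
  rcases le_or_gt 0 (((Fmap α)^[n] z).im) with h | h
  · have : r ≤ ((Fmap α)^[n] z).im := by rwa [abs_of_nonneg h] at this
    have : 0 < ((Fmap α)^[n] w).im := by rw [himw]; linarith
    linarith [hn ▸ this]
  · have : ((Fmap α)^[n] z).im ≤ -r := by
      have h2 := hfar n; rw [abs_of_neg h] at h2; linarith
    have : ((Fmap α)^[n] w).im < 0 := by rw [himw]; linarith
    linarith [hn ▸ this]

/-- the closure of the critical set is exactly the set of points
    whose orbit approaches the real axis. -/
theorem stmt14 (p q : ℕ) (hp : 0 < p) (hq : 0 < q) (hpq : Nat.gcd p q = 1)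
    (α : ℝ) (hα : α = 2 * Real.pi * p / q) :
    closure (critSet α) = {z : ℂ | (⨅ n : ℕ, |((Fmap α)^[n] z).im|) = 0} ∧
      ∀ z : ℂ, z ∈ closure (critSet α) ↔
        ∀ ε : ℝ, 0 < ε → ∃ n : ℕ, |((Fmap α)^[n] z).im| < ε := by
  have hbdd : ∀ z : ℂ, BddBelow (Set.range fun n : ℕ => |((Fmap α)^[n] z).im|) := by
    intro z; exact ⟨0, by rintro x ⟨n, rfl⟩; positivity⟩
  have hnonneg : ∀ z : ℂ, 0 ≤ ⨅ n : ℕ, |((Fmap α)^[n] z).im| := by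
    intro z; exact le_ciInf fun n => abs_nonneg _
  have hmain : closure (critSet α) = {z : ℂ | (⨅ n : ℕ, |((Fmap α)^[n] z).im|) = 0} := by
    ext z
    simp only [Set.mem_setOf_eq]
    constructor
    · intro hz
      by_contra h
      have hpos : 0 < ⨅ n : ℕ, |((Fmap α)^[n] z).im| := lt_of_le_of_ne (hnonneg z) (Ne.symm h)
      set r := ⨅ n : ℕ, |((Fmap α)^[n] z).im| with hrdef
      have hfar : ∀ n, r ≤ |((Fmap α)^[n] z).im| := fun n => ciInf_le (hbdd z) n
      have hmiss := ball_miss_of_orbit_far α z r hpos hfar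
      rw [Metric.mem_closure_iff] at hz
      obtain ⟨w, hw, hd⟩ := hz r hpos
      exact hmiss w (by rwa [← Complex.dist_eq, dist_comm]) hw
    · intro h0
      rw [Metric.mem_closure_iff]
      intro ε hε
      by_contra hno
      push_neg at hno
      have hmiss : ∀ w : ℂ, ‖w - z‖ < ε → w ∉ critSet α := by
        intro w hw hwc
        exact absurd (by rwa [Complex.dist_eq, ← norm_neg, neg_sub]) (not_lt.2 (hno w hwc)).elim
      have hfar := orbit_far_of_ball_miss α z ε hmiss
      have : ε ≤ 0 := h0 ▸ le_ciInf hfar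
      linarith
  refine ⟨hmain, fun z => ?_⟩
  rw [hmain]
  simp only [Set.mem_setOf_eq]
  constructor
  · intro h0 ε hε
    have : (⨅ n : ℕ, |((Fmap α)^[n] z).im|) < ε := by rw [h0]; exact hε
    exact exists_lt_of_ciInf_lt this
  · intro hε
    by_contra h
    have hpos : 0 < ⨅ n : ℕ, |((Fmap α)^[n] z).im| := lt_of_le_of_ne (hnonneg z) (Ne.symm h)
    obtain ⟨n, hn⟩ := hε _ hpos
    exact absurd (ciInf_le (hbdd z) n) (not_le.2 hn)
end

section
/- Assume α = 2πp/q where p, q are positive integers with gcd(p, q) = 1. Then every point of cl(𝓕) \ 𝓕 is aperiodic: if z ∈ cl(𝓕) and z ∉ 𝓕, then Fⁿ(z) ≠ z for every integer n ≥ 1. -/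
lemma Hfun_eq_of_close {w z : ℂ} (h : ‖w - z‖ < |z.im|) : Hfun w = Hfun z := by
  have him : |w.im - z.im| < |z.im| :=
    lt_of_le_of_lt (by simpa using Complex.abs_im_le_norm (w - z)) h
  have h1 := abs_lt.mp him
  unfold Hfun
  rcases lt_or_ge z.im 0 with hzi | hzi
  · rw [abs_of_neg hzi] at h1
    have hw : w.im < 0 := by linarith [h1.2]
    simp [hzi.not_ge, hw.not_ge]
  · rw [abs_of_nonneg hzi] at h1
    have hw : 0 ≤ w.im := by linarith [h1.1]
    simp [hzi, hw]

lemma abs_Fmap_sub (α : ℝ) {w z : ℂ} (h : Hfun w = Hfun z) :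
    ‖Fmap α w - Fmap α z‖ = ‖w - z‖ := by
  have : Fmap α w - Fmap α z = Complex.exp (α * Complex.I) * (w - z) := by
    simp only [Fmap, h]; ring
  rw [this, norm_mul, Complex.norm_exp_ofReal_mul_I, one_mul]

/-- every point of cl(𝓕) \ 𝓕 is aperiodic. -/
theorem stmt15 (p q : ℕ) (hp : 0 < p) (hq : 0 < q) (hpq : Nat.gcd p q = 1)
    (α : ℝ) (hα : α = 2 * Real.pi * p / q)
    (z : ℂ) (hz : z ∈ closure (critSet α)) (hz' : z ∉ critSet α) :
    ∀ n : ℕ, 1 ≤ n → (Fmap α)^[n] z ≠ z := by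
  intro n hn hfix
  simp only [critSet, Set.mem_setOf_eq, not_exists] at hz'
  have hper : Function.IsPeriodicPt (Fmap α) n z := hfix
  have hne : (Finset.range n).Nonempty := Finset.nonempty_range_iff.mpr (by omega)
  set δ : ℝ := (Finset.range n).inf' hne (fun k => |((Fmap α)^[k] z).im|) with hδ
  have hδpos : 0 < δ := by
    rw [hδ, Finset.lt_inf'_iff]
    intro k _
    exact abs_pos.mpr (hz' k)
  have hδle : ∀ m : ℕ, δ ≤ |((Fmap α)^[m] z).im| := by
    intro m
    have h1 : (Fmap α)^[m % n] z = (Fmap α)^[m] z := hper.iterate_mod_apply m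
    rw [← h1]
    exact Finset.inf'_le _ (Finset.mem_range.mpr (Nat.mod_lt m (by omega)))
  -- find a point of critSet within δ of z
  obtain ⟨w, hwcrit, hwdist⟩ := Metric.mem_closure_iff.mp hz δ hδpos
  have hwz : ‖w - z‖ < δ := by
    rwa [dist_comm, Complex.dist_eq] at hwdist
  -- all iterates stay at the same distance
  have key : ∀ m : ℕ, ‖(Fmap α)^[m] w - (Fmap α)^[m] z‖ = ‖w - z‖ := by
    intro m
    induction m with
    | zero => simp
    | succ m ih =>
      rw [Function.iterate_succ_apply', Function.iterate_succ_apply']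
      refine (abs_Fmap_sub α ?_).trans ih
      exact Hfun_eq_of_close (by rw [ih]; exact lt_of_lt_of_le hwz (hδle m))
  -- w's iterates never hit the real line, contradicting w ∈ critSet
  obtain ⟨m, hm⟩ := hwcrit
  have hlt : ‖(Fmap α)^[m] w - (Fmap α)^[m] z‖ < |((Fmap α)^[m] z).im| := by
    rw [key m]; exact lt_of_lt_of_le hwz (hδle m)
  have him : |((Fmap α)^[m] w).im - ((Fmap α)^[m] z).im| < |((Fmap α)^[m] z).im| :=
    lt_of_le_of_lt (by simpa using Complex.abs_im_le_norm ((Fmap α)^[m] w - (Fmap α)^[m] z)) hlt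
  rw [hm, zero_sub, abs_neg] at him
  exact lt_irrefl _ him
end
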